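/- Let φ : [0,∞) → [0,∞) be continuous, increasing and subadditive with φ(0) = 0 and linear growth with constant ν > 0 (φ(x) ≤ ν(x+1) for all x ≥ 0), let μ > 0, and let g : ℝ × ℝ^d → ℝ satisfy |g(y₁, z₁) − g(y₂, z₂)| ≤ μ|y₁ − y₂| + φ(‖z₁ − z₂‖) for all (y₁, z₁), (y₂, z₂), together with g(0, 0) = 0. For m > max(μ, ν) let g̲_m(y, z) := inf{ g(a, b) + m(|y − a| + ‖z − b‖) : (a, b) ∈ ℚ × ℚ^d } and ḡ_m(y, z) := sup{ g(a, b) − m(|y − a| + ‖z − b‖) : (a, b) ∈ ℚ × ℚ^d }. Then for every m > max(μ, ν) and every (y, z) ∈ ℝ × ℝ^d: |g̲_m(y, z)| ≤ max(μ, ν)(1 + |y| + ‖z‖) and |ḡ_m(y, z)| ≤ max(μ, ν)(1 + |y| + ‖z‖). -/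

import Mathlib

/-- A vector in `ℝ^d` with the given rational coordinates. -/
noncomputable def ratVec (d : ℕ) (b : Fin d → ℚ) : EuclideanSpace ℝ (Fin d) :=
  WithLp.toLp 2 (fun i => (b i : ℝ))

/-- The Lepeltier–San Martin lower approximation `g̲_m` (equation (2.1) of the paper). -/
noncomputable def lowerApprox (d : ℕ) (g : ℝ → EuclideanSpace ℝ (Fin d) → ℝ) (m : ℝ)
    (y : ℝ) (z : EuclideanSpace ℝ (Fin d)) : ℝ :=
  sInf {r : ℝ | ∃ (a : ℚ) (b : Fin d → ℚ),
    r = g (a : ℝ) (ratVec d b) + m * (|y - (a : ℝ)| + ‖z - ratVec d b‖)}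

/-- The Lepeltier–San Martin upper approximation `ḡ_m` (equation (2.2) of the paper). -/
noncomputable def upperApprox (d : ℕ) (g : ℝ → EuclideanSpace ℝ (Fin d) → ℝ) (m : ℝ)
    (y : ℝ) (z : EuclideanSpace ℝ (Fin d)) : ℝ :=
  sSup {r : ℝ | ∃ (a : ℚ) (b : Fin d → ℚ),
    r = g (a : ℝ) (ratVec d b) - m * (|y - (a : ℝ)| + ‖z - ratVec d b‖)}

lemma exists_ratVec_near (d : ℕ) (hd : 1 ≤ d) (z : EuclideanSpace ℝ (Fin d)) {ε : ℝ}
    (hε : 0 < ε) : ∃ b : Fin d → ℚ, ‖z - ratVec d b‖ ≤ ε := by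
  have hd0 : (0:ℝ) < Real.sqrt d := Real.sqrt_pos.mpr (by exact_mod_cast Nat.lt_of_lt_of_le Nat.zero_lt_one hd)
  have hchoice : ∀ i : Fin d, ∃ q : ℚ, |z i - (q:ℝ)| < ε / Real.sqrt d := fun i =>
    exists_rat_near (z i) (by positivity)
  choose b hb using hchoice
  refine ⟨b, ?_⟩
  have h1 : ‖z - ratVec d b‖ ≤ Real.sqrt (∑ _i : Fin d, (ε / Real.sqrt d)^2) := by
    rw [EuclideanSpace.norm_eq]
    apply Real.sqrt_le_sqrt
    apply Finset.sum_le_sum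
    intro i _
    have h2 : ‖(z - ratVec d b) i‖ ≤ ε / Real.sqrt d := by
      simpa [ratVec, Real.norm_eq_abs] using (hb i).le
    exact pow_le_pow_left₀ (norm_nonneg _) h2 2
  have h3 : (∑ _i : Fin d, (ε / Real.sqrt d)^2) = ε ^ 2 := by
    rw [Finset.sum_const, Finset.card_univ, Fintype.card_fin, nsmul_eq_mul, div_pow,
      Real.sq_sqrt (by positivity)]
    field_simp
  rw [h3, Real.sqrt_sq hε.le] at h1
  exact h1

/-- If moreover `g(0,0) = 0`, then the approximations `g̲_m` and `ḡ_m`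
have linear growth in `(y, z)` with constant `μ ∨ ν`:
`|g̲_m(y,z)| ≤ (μ ∨ ν)(1 + |y| + ‖z‖)` and `|ḡ_m(y,z)| ≤ (μ ∨ ν)(1 + |y| + ‖z‖)`. -/
theorem stmt_4 (d : ℕ) (hd : 1 ≤ d) (μ ν : ℝ) (hμ : 0 < μ) (hν : 0 < ν)
    (φ : ℝ → ℝ)
    (hφ_cont : ContinuousOn φ (Set.Ici 0))
    (hφ_nonneg : ∀ x, 0 ≤ x → 0 ≤ φ x)
    (hφ_mono : ∀ a b, 0 ≤ a → a ≤ b → φ a ≤ φ b)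
    (hφ_subadd : ∀ a b, 0 ≤ a → 0 ≤ b → φ (a + b) ≤ φ a + φ b)
    (hφ0 : φ 0 = 0)
    (hφ_growth : ∀ x, 0 ≤ x → φ x ≤ ν * (x + 1))
    (g : ℝ → EuclideanSpace ℝ (Fin d) → ℝ)
    (hg : ∀ (y₁ y₂ : ℝ) (z₁ z₂ : EuclideanSpace ℝ (Fin d)),
      |g y₁ z₁ - g y₂ z₂| ≤ μ * |y₁ - y₂| + φ ‖z₁ - z₂‖)
    (hg0 : g 0 0 = 0) :
    ∀ m, max μ ν < m → ∀ (y : ℝ) (z : EuclideanSpace ℝ (Fin d)),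
      |lowerApprox d g m y z| ≤ max μ ν * (1 + |y| + ‖z‖) ∧
      |upperApprox d g m y z| ≤ max μ ν * (1 + |y| + ‖z‖) := by
  intro m hm y z
  set M : ℝ := max μ ν with hM
  have hM0 : 0 < M := lt_max_of_lt_left hμ
  have hμM : μ ≤ M := le_max_left _ _
  have hνM : ν ≤ M := le_max_right _ _
  have hm0 : 0 < m := hM0.trans hm
  -- bound on |g a b|
  have gbound : ∀ (a : ℝ) (b : EuclideanSpace ℝ (Fin d)),
      |g a b| ≤ M * (1 + |a| + ‖b‖) := by
    intro a b
    have h1 := hg a 0 b 0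
    rw [hg0, sub_zero, sub_zero, sub_zero] at h1
    have h2 : φ ‖b‖ ≤ ν * (‖b‖ + 1) := hφ_growth _ (norm_nonneg _)
    have h3 : 0 ≤ |a| := abs_nonneg _
    have h4 : 0 ≤ ‖b‖ := norm_nonneg _
    nlinarith [mul_le_mul_of_nonneg_right hμM h3, mul_le_mul_of_nonneg_right hνM h4]
  set B : ℝ := M * (1 + |y| + ‖z‖) with hB
  have hB0 : 0 ≤ B := by positivity
  -- per-element bounds
  have key : ∀ (a : ℚ) (b : Fin d → ℚ),
      -B ≤ g (a:ℝ) (ratVec d b) + m * (|y - (a:ℝ)| + ‖z - ratVec d b‖) ∧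
      g (a:ℝ) (ratVec d b) - m * (|y - (a:ℝ)| + ‖z - ratVec d b‖) ≤ B := by
    intro a b
    have h1 := gbound (a:ℝ) (ratVec d b)
    have h2 : |(a:ℝ)| - |y| ≤ |y - (a:ℝ)| := by
      rw [abs_sub_comm]; exact abs_sub_abs_le_abs_sub _ _
    have h3 : ‖ratVec d b‖ - ‖z‖ ≤ ‖z - ratVec d b‖ := by
      rw [norm_sub_rev]; exact norm_sub_norm_le _ _
    have h4 : 0 ≤ |y - (a:ℝ)| := abs_nonneg _
    have h5 : 0 ≤ ‖z - ratVec d b‖ := norm_nonneg _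
    have habs := abs_le.mp h1
    have hmM : M ≤ m := hm.le
    constructor
    · nlinarith [mul_le_mul_of_nonneg_right hmM h4, mul_le_mul_of_nonneg_right hmM h5]
    · nlinarith [mul_le_mul_of_nonneg_right hmM h4, mul_le_mul_of_nonneg_right hmM h5]
  set Sl := {r : ℝ | ∃ (a : ℚ) (b : Fin d → ℚ),
    r = g (a : ℝ) (ratVec d b) + m * (|y - (a : ℝ)| + ‖z - ratVec d b‖)} with hSl
  set Su := {r : ℝ | ∃ (a : ℚ) (b : Fin d → ℚ),
    r = g (a : ℝ) (ratVec d b) - m * (|y - (a : ℝ)| + ‖z - ratVec d b‖)} with hSu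
  have hne_l : Sl.Nonempty := ⟨_, 0, 0, rfl⟩
  have hne_u : Su.Nonempty := ⟨_, 0, 0, rfl⟩
  have hbdd_l : BddBelow Sl := ⟨-B, by rintro r ⟨a, b, rfl⟩; exact (key a b).1⟩
  have hbdd_u : BddAbove Su := ⟨B, by rintro r ⟨a, b, rfl⟩; exact (key a b).2⟩
  -- approximation: for any ε > 0 find close rational points
  have near : ∀ ε : ℝ, 0 < ε → ∃ (a : ℚ) (b : Fin d → ℚ),
      |y - (a:ℝ)| ≤ ε ∧ ‖z - ratVec d b‖ ≤ ε := by
    intro ε hε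
    obtain ⟨a, ha⟩ := exists_rat_near y hε
    obtain ⟨b, hb⟩ := exists_ratVec_near d hd z hε
    exact ⟨a, b, ha.le, hb⟩
  have gupper : ∀ (a : ℚ) (b : Fin d → ℚ),
      g (a:ℝ) (ratVec d b) ≤ B + M * (|y - (a:ℝ)| + ‖z - ratVec d b‖) := by
    intro a b
    have h1 := (abs_le.mp (gbound (a:ℝ) (ratVec d b))).2
    have h2 : |(a:ℝ)| - |y| ≤ |y - (a:ℝ)| := by
      rw [abs_sub_comm]; exact abs_sub_abs_le_abs_sub _ _
    have h3 : ‖ratVec d b‖ - ‖z‖ ≤ ‖z - ratVec d b‖ := by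
      rw [norm_sub_rev]; exact norm_sub_norm_le _ _
    nlinarith
  have glower : ∀ (a : ℚ) (b : Fin d → ℚ),
      -B - M * (|y - (a:ℝ)| + ‖z - ratVec d b‖) ≤ g (a:ℝ) (ratVec d b) := by
    intro a b
    have h1 := (abs_le.mp (gbound (a:ℝ) (ratVec d b))).1
    have h2 : |(a:ℝ)| - |y| ≤ |y - (a:ℝ)| := by
      rw [abs_sub_comm]; exact abs_sub_abs_le_abs_sub _ _
    have h3 : ‖ratVec d b‖ - ‖z‖ ≤ ‖z - ratVec d b‖ := by
      rw [norm_sub_rev]; exact norm_sub_norm_le _ _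
    nlinarith
  constructor
  · rw [abs_le]
    constructor
    · exact le_csInf hne_l (by rintro r ⟨a, b, rfl⟩; exact (key a b).1)
    · -- sInf Sl ≤ B
      refine le_of_forall_pos_le_add ?_
      intro ε hε
      set δ : ℝ := ε / (2 * M + 2 * m) with hδ
      have hδ0 : 0 < δ := by positivity
      obtain ⟨a, b, ha, hb⟩ := near δ hδ0
      have h1 : lowerApprox d g m y z ≤
          g (a:ℝ) (ratVec d b) + m * (|y - (a:ℝ)| + ‖z - ratVec d b‖) :=
        csInf_le hbdd_l ⟨a, b, rfl⟩
      have h2 := gupper a b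
      have h3 : M * (|y - (a:ℝ)| + ‖z - ratVec d b‖) + m * (|y - (a:ℝ)| + ‖z - ratVec d b‖)
          ≤ (M + m) * (2 * δ) := by nlinarith
      have h4 : (M + m) * (2 * δ) = ε := by rw [hδ]; field_simp
      calc lowerApprox d g m y z ≤ _ := h1
        _ ≤ B + ε := by nlinarith
  · rw [abs_le]
    constructor
    · -- -B ≤ sSup Su
      have : ∀ ε : ℝ, 0 < ε → -B ≤ upperApprox d g m y z + ε := by
        intro ε hε
        set δ : ℝ := ε / (2 * M + 2 * m) with hδ
        have hδ0 : 0 < δ := by positivity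
        obtain ⟨a, b, ha, hb⟩ := near δ hδ0
        have h1 : g (a:ℝ) (ratVec d b) - m * (|y - (a:ℝ)| + ‖z - ratVec d b‖)
            ≤ upperApprox d g m y z := le_csSup hbdd_u ⟨a, b, rfl⟩
        have h2 := glower a b
        have h3 : M * (|y - (a:ℝ)| + ‖z - ratVec d b‖) + m * (|y - (a:ℝ)| + ‖z - ratVec d b‖)
            ≤ (M + m) * (2 * δ) := by
          have h4 : 0 ≤ |y - (a:ℝ)| := abs_nonneg _
          have h5 : 0 ≤ ‖z - ratVec d b‖ := norm_nonneg _
          nlinarith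
        have h4 : (M + m) * (2 * δ) = ε := by rw [hδ]; field_simp
        nlinarith
      linarith [le_of_forall_pos_le_add (a := -B - upperApprox d g m y z) (b := 0)
        (fun ε hε => by linarith [this ε hε])]
    · exact csSup_le hne_u (by rintro r ⟨a, b, rfl⟩; exact (key a b).2)
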